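/- Annihilator construction (Section 2, kernel identity). Let U, V be finite-dimensional real inner product spaces and let B ∈ Lin(U,V) be injective. Define M := det(B*B)·id_V − B ∘ adj(B*B) ∘ B* ∈ Lin(V,V), where B* is the adjoint of B and adj denotes the adjugate (transpose of the cofactor matrix) of a linear endomorphism of U. Then ker M = im B. (Applied to B = 𝔹(ξ) for an elliptic symbol 𝔹, this shows the 2kd-homogeneous operator 𝒜 with symbol 𝔸(ξ) = det(𝔹(ξ)*𝔹(ξ)) id_V − 𝔹(ξ) ∘ adj(𝔹(ξ)*𝔹(ξ)) ∘ 𝔹(ξ)* satisfies im 𝔹(ξ) = ker 𝔸(ξ) for all ξ ≠ 0, hence 𝒜 ∘ ℬ = 0.) -/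

import Mathlib

open LinearMap

/-- **Annihilator construction** (Section 2, kernel identity). Let `B : U → V` be an
injective linear map between finite-dimensional real inner product spaces and let
`N = adj(B*B)` be the adjugate of `B*B`, characterized by
`N ∘ (B*B) = (B*B) ∘ N = det(B*B) • id` (which determines `N` uniquely since `B*B`
is invertible). Then the map `M = det(B*B) • id_V − B ∘ N ∘ B*` satisfies
`ker M = im B`. -/
theorem annihilator_kernel_identity
    {U V : Type*} [NormedAddCommGroup U] [InnerProductSpace ℝ U] [FiniteDimensional ℝ U]
    [NormedAddCommGroup V] [InnerProductSpace ℝ V] [FiniteDimensional ℝ V]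
    (B : U →ₗ[ℝ] V) (hB : Function.Injective B)
    (N : U →ₗ[ℝ] U)
    (hN₁ : N ∘ₗ (LinearMap.adjoint B ∘ₗ B) =
      (LinearMap.det (LinearMap.adjoint B ∘ₗ B)) • (LinearMap.id : U →ₗ[ℝ] U))
    (hN₂ : (LinearMap.adjoint B ∘ₗ B) ∘ₗ N =
      (LinearMap.det (LinearMap.adjoint B ∘ₗ B)) • (LinearMap.id : U →ₗ[ℝ] U)) :
    LinearMap.ker ((LinearMap.det (LinearMap.adjoint B ∘ₗ B)) • (LinearMap.id : V →ₗ[ℝ] V) -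
        B ∘ₗ N ∘ₗ LinearMap.adjoint B) =
      LinearMap.range B := by
  set d := LinearMap.det (LinearMap.adjoint B ∘ₗ B) with hd
  -- B*B is injective
  have hinj : LinearMap.ker (LinearMap.adjoint B ∘ₗ B) = ⊥ := by
    rw [LinearMap.ker_eq_bot']
    intro u hu
    have h1 : inner ℝ ((LinearMap.adjoint B ∘ₗ B) u) u = (0 : ℝ) := by rw [hu]; simp
    rw [LinearMap.comp_apply, LinearMap.adjoint_inner_left, inner_self_eq_zero] at h1
    exact hB (by simpa using h1)
  -- hence d ≠ 0
  have hd0 : d ≠ 0 := by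
    intro h
    have := LinearMap.bot_lt_ker_of_det_eq_zero (hd ▸ h)
    rw [hinj] at this
    exact lt_irrefl _ this
  ext v
  simp only [LinearMap.mem_ker, LinearMap.sub_apply, LinearMap.smul_apply, LinearMap.id_apply,
    LinearMap.comp_apply, sub_eq_zero, LinearMap.mem_range]
  constructor
  · intro h
    exact ⟨d⁻¹ • N (LinearMap.adjoint B v), by
      rw [map_smul, ← h, smul_smul, inv_mul_cancel₀ hd0, one_smul]⟩
  · rintro ⟨u, rfl⟩
    have := congrFun (congrArg DFunLike.coe hN₁) u
    simp only [LinearMap.comp_apply, LinearMap.smul_apply, LinearMap.id_apply] at this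
    rw [this, map_smul]
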